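/- Given two functions γ, ν : [0,1] → ℝ such that ν is bounded, left-continuous on (0,1], and nonincreasing; γ is bounded, left-continuous on (0,1], and nondecreasing; γ(1) ≤ ν(1); and both are right-continuous at 0, there exists a unique fuzzy number u with [u]^λ = [γ(λ), ν(λ)] for all λ ∈ [0,1]. -/
import Mathlib


open Set Filter Topology

/-- A fuzzy number: a normal, fuzzy-convex, upper semicontinuous function `ℝ → [0,1]`
with compact support closure. -/
structure FuzzyNumber where
  toFun : ℝ → ℝ
  mem_Icc' : ∀ x, toFun x ∈ Set.Icc (0:ℝ) 1
  normal' : ∃ x, toFun x = 1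
  convex' : ∀ x y lam, lam ∈ Set.Icc (0:ℝ) 1 →
      min (toFun x) (toFun y) ≤ toFun (lam * x + (1 - lam) * y)
  usc' : UpperSemicontinuous toFun
  compact' : IsCompact (closure {x | 0 < toFun x})

namespace FuzzyNumber

/-- The `λ`-level set: for `λ ≠ 0` it is `{x | u x ≥ λ}`; for `λ = 0` it is the
closure of the support. -/
def levelSet (u : FuzzyNumber) (lam : ℝ) : Set ℝ :=
  if lam = 0 then closure {x | 0 < u.toFun x} else {x | lam ≤ u.toFun x}

/-- The left endpoint `u⁻(λ)` of the level set. -/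
noncomputable def low (u : FuzzyNumber) (lam : ℝ) : ℝ := sInf (u.levelSet lam)

/-- The right endpoint `u⁺(λ)` of the level set. -/
noncomputable def up (u : FuzzyNumber) (lam : ℝ) : ℝ := sSup (u.levelSet lam)

/-- The supremum metric `d∞` on fuzzy numbers. -/
noncomputable def dSup (u v : FuzzyNumber) : ℝ :=
  ⨆ lam : Set.Icc (0:ℝ) 1,
    max |u.low lam.1 - v.low lam.1| |u.up lam.1 - v.up lam.1|

end FuzzyNumber

lemma FuzzyNumber.ext' {a b : FuzzyNumber} (h : a.toFun = b.toFun) : a = b := by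
  cases a; cases b; simp only at h; subst h; rfl

open Classical in
noncomputable def GVfun (γ ν : ℝ → ℝ) : ℝ → ℝ := fun x =>
  if x ∈ Set.Icc (γ 0) (ν 0) then
    sSup {μ | μ ∈ Set.Icc (0:ℝ) 1 ∧ γ μ ≤ x ∧ x ≤ ν μ} else 0

lemma GVfun_of_mem (γ ν : ℝ → ℝ) {x : ℝ} (hx : x ∈ Set.Icc (γ 0) (ν 0)) :
    GVfun γ ν x = sSup {μ | μ ∈ Set.Icc (0:ℝ) 1 ∧ γ μ ≤ x ∧ x ≤ ν μ} := by
  simp only [GVfun, if_pos hx]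

lemma GVfun_of_notMem (γ ν : ℝ → ℝ) {x : ℝ} (hx : x ∉ Set.Icc (γ 0) (ν 0)) :
    GVfun γ ν x = 0 := by
  simp only [GVfun, if_neg hx]

open FuzzyNumber in
/-- Goetschel–Voxman converse: two functions satisfying conditions (i)–(iv) are the
endpoint functions of a unique fuzzy number. -/
theorem fuzzyNumber_of_endpoint_functions (γ ν : ℝ → ℝ)
    (hν_bdd : ∃ M : ℝ, ∀ lam ∈ Set.Icc (0:ℝ) 1, |ν lam| ≤ M)
    (hν_lc : ∀ lam ∈ Set.Ioc (0:ℝ) 1,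
      Filter.Tendsto ν (nhdsWithin lam (Set.Iio lam)) (nhds (ν lam)))
    (hν_anti : AntitoneOn ν (Set.Ioc (0:ℝ) 1))
    (hγ_bdd : ∃ M : ℝ, ∀ lam ∈ Set.Icc (0:ℝ) 1, |γ lam| ≤ M)
    (hγ_lc : ∀ lam ∈ Set.Ioc (0:ℝ) 1,
      Filter.Tendsto γ (nhdsWithin lam (Set.Iio lam)) (nhds (γ lam)))
    (hγ_mono : MonotoneOn γ (Set.Ioc (0:ℝ) 1))
    (h_le : γ 1 ≤ ν 1)
    (hγ_rc : Filter.Tendsto γ (nhdsWithin 0 (Set.Ioi 0)) (nhds (γ 0)))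
    (hν_rc : Filter.Tendsto ν (nhdsWithin 0 (Set.Ioi 0)) (nhds (ν 0))) :
    ∃! u : FuzzyNumber, ∀ lam ∈ Set.Icc (0:ℝ) 1,
      u.levelSet lam = Set.Icc (γ lam) (ν lam) := by
  classical
  set S : ℝ → Set ℝ := fun x => {μ | μ ∈ Set.Icc (0:ℝ) 1 ∧ γ μ ≤ x ∧ x ≤ ν μ} with hSdef
  set f : ℝ → ℝ := GVfun γ ν with hfdef
  have h1m : (1:ℝ) ∈ Set.Ioc (0:ℝ) 1 := ⟨one_pos, le_refl 1⟩
  have hγ0 : ∀ lam ∈ Set.Ioc (0:ℝ) 1, γ 0 ≤ γ lam := by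
    intro lam hlam
    refine le_of_tendsto hγ_rc ?_
    filter_upwards [Ioo_mem_nhdsGT_of_mem (show (0:ℝ) ∈ Set.Ico (0:ℝ) lam from
      ⟨le_refl 0, hlam.1⟩)] with μ hμ
    exact hγ_mono ⟨hμ.1, hμ.2.le.trans hlam.2⟩ hlam hμ.2.le
  have hν0 : ∀ lam ∈ Set.Ioc (0:ℝ) 1, ν lam ≤ ν 0 := by
    intro lam hlam
    refine ge_of_tendsto hν_rc ?_
    filter_upwards [Ioo_mem_nhdsGT_of_mem (show (0:ℝ) ∈ Set.Ico (0:ℝ) lam from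
      ⟨le_refl 0, hlam.1⟩)] with μ hμ
    exact hν_anti ⟨hμ.1, hμ.2.le.trans hlam.2⟩ hlam hμ.2.le
  have hgn : ∀ lam ∈ Set.Ioc (0:ℝ) 1, γ lam ≤ ν lam := fun lam hlam =>
    (hγ_mono hlam h1m hlam.2).trans (h_le.trans (hν_anti hlam h1m hlam.2))
  have hgn0 : γ 0 ≤ ν 0 := (hγ0 1 h1m).trans ((hgn 1 h1m).trans (hν0 1 h1m))
  have hbdd : ∀ x, BddAbove (S x) := fun x => ⟨1, fun μ hμ => hμ.1.2⟩
  have h0S : ∀ x, x ∈ Set.Icc (γ 0) (ν 0) → (0:ℝ) ∈ S x := fun x hx =>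
    ⟨⟨le_refl 0, zero_le_one⟩, hx.1, hx.2⟩
  have hf_nonneg : ∀ x, 0 ≤ f x := by
    intro x
    by_cases hx : x ∈ Set.Icc (γ 0) (ν 0)
    · rw [hfdef, GVfun_of_mem γ ν hx]
      exact le_csSup (hbdd x) (h0S x hx)
    · rw [hfdef, GVfun_of_notMem γ ν hx]
  have hf_le_one : ∀ x, f x ≤ 1 := by
    intro x
    by_cases hx : x ∈ Set.Icc (γ 0) (ν 0)
    · rw [hfdef, GVfun_of_mem γ ν hx]
      exact csSup_le ⟨0, h0S x hx⟩ fun μ hμ => hμ.1.2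
    · rw [hfdef, GVfun_of_notMem γ ν hx]; exact zero_le_one
  -- key level set identity for positive levels
  have hlevel : ∀ lam ∈ Set.Ioc (0:ℝ) 1, {x | lam ≤ f x} = Set.Icc (γ lam) (ν lam) := by
    intro lam hlam
    ext x
    simp only [mem_setOf_eq, mem_Icc]
    constructor
    · intro hx
      have hx0 : x ∈ Set.Icc (γ 0) (ν 0) := by
        by_contra h
        rw [hfdef, GVfun_of_notMem γ ν h] at hx
        exact absurd (hlam.1.trans_le hx) (lt_irrefl 0)
      have hfx : f x = sSup (S x) := GVfun_of_mem γ ν hx0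
      have key : ∀ μ ∈ Set.Ioo (0:ℝ) lam, γ μ ≤ x ∧ x ≤ ν μ := by
        intro μ hμ
        have hlt : μ < sSup (S x) := lt_of_lt_of_le hμ.2 (hfx ▸ hx)
        obtain ⟨μ', hμ'S, hμμ'⟩ := exists_lt_of_lt_csSup ⟨0, h0S x hx0⟩ hlt
        have hμ'1 : μ' ∈ Set.Ioc (0:ℝ) 1 := ⟨hμ.1.trans hμμ', hμ'S.1.2⟩
        have hμ1 : μ ∈ Set.Ioc (0:ℝ) 1 := ⟨hμ.1, hμμ'.le.trans hμ'S.1.2⟩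
        exact ⟨(hγ_mono hμ1 hμ'1 hμμ'.le).trans hμ'S.2.1,
               hμ'S.2.2.trans (hν_anti hμ1 hμ'1 hμμ'.le)⟩
      have hev : Set.Ioo (0:ℝ) lam ∈ 𝓝[<] lam :=
        Ioo_mem_nhdsLT_of_mem ⟨hlam.1, le_refl lam⟩
      constructor
      · exact le_of_tendsto (hγ_lc lam hlam)
          (eventually_of_mem hev fun μ hμ => (key μ hμ).1)
      · exact ge_of_tendsto (hν_lc lam hlam)
          (eventually_of_mem hev fun μ hμ => (key μ hμ).2)
    · intro hx
      have hx0 : x ∈ Set.Icc (γ 0) (ν 0) :=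
        ⟨(hγ0 lam hlam).trans hx.1, hx.2.trans (hν0 lam hlam)⟩
      have hlamS : lam ∈ S x := ⟨⟨hlam.1.le, hlam.2⟩, hx.1, hx.2⟩
      calc lam ≤ sSup (S x) := le_csSup (hbdd x) hlamS
        _ = f x := (GVfun_of_mem γ ν hx0).symm
  have hsupp : {x | 0 < f x} ⊆ Set.Icc (γ 0) (ν 0) := by
    intro x hx
    by_contra h
    rw [mem_setOf_eq, hfdef, GVfun_of_notMem γ ν h] at hx
    exact lt_irrefl 0 hx
  -- closure of support
  have hmem1 : ∀ n : ℕ, (1:ℝ)/(n+1) ∈ Set.Ioc (0:ℝ) 1 := by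
    intro n
    constructor
    · positivity
    · rw [div_le_one (by positivity)]
      have : (0:ℝ) ≤ n := Nat.cast_nonneg n
      linarith
  have htend0 : Tendsto (fun n : ℕ => (1:ℝ)/(n+1)) atTop (𝓝[>] 0) :=
    tendsto_nhdsWithin_of_tendsto_nhds_of_eventually_within _
      tendsto_one_div_add_atTop_nhds_zero_nat
      (Filter.Eventually.of_forall fun n => (hmem1 n).1)
  have hcl : closure {x | 0 < f x} = Set.Icc (γ 0) (ν 0) := by
    refine Subset.antisymm (closure_minimal hsupp isClosed_Icc) ?_
    intro x hx
    set p : ℕ → ℝ := fun n => max (γ (1/(n+1))) (min x (ν (1/(n+1)))) with hp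
    have hγt : Tendsto (fun n : ℕ => γ (1/(n+1))) atTop (𝓝 (γ 0)) := hγ_rc.comp htend0
    have hνt : Tendsto (fun n : ℕ => ν (1/(n+1))) atTop (𝓝 (ν 0)) := hν_rc.comp htend0
    have hpt : Tendsto p atTop (𝓝 x) := by
      have h := hγt.max ((tendsto_const_nhds : Tendsto (fun _ : ℕ => x) atTop (𝓝 x)).min hνt)
      rwa [min_eq_left hx.2, max_eq_right hx.1] at h
    refine mem_closure_of_tendsto hpt (Filter.Eventually.of_forall fun n => ?_)
    have hmem : p n ∈ Set.Icc (γ (1/(n+1))) (ν (1/(n+1))) := by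
      constructor
      · exact le_max_left _ _
      · exact max_le (hgn _ (hmem1 n)) (min_le_right _ _)
    rw [← hlevel _ (hmem1 n)] at hmem
    exact lt_of_lt_of_le (hmem1 n).1 hmem
  -- fuzzy number axioms
  have hnormal : f (γ 1) = 1 := by
    have : γ 1 ∈ {x | (1:ℝ) ≤ f x} := by
      rw [hlevel 1 h1m]
      exact ⟨le_refl _, h_le⟩
    exact le_antisymm (hf_le_one _) this
  have husc : UpperSemicontinuous f := by
    rw [upperSemicontinuous_iff_isOpen_preimage]
    intro y
    rcases le_or_gt y 0 with hy | hy
    · convert isOpen_empty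
      ext x
      simp only [mem_preimage, mem_Iio, mem_empty_iff_false, iff_false, not_lt]
      exact hy.trans (hf_nonneg x)
    rcases le_or_gt y 1 with hy1 | hy1
    · have : f ⁻¹' Set.Iio y = (Set.Icc (γ y) (ν y))ᶜ := by
        ext x
        simp only [mem_preimage, mem_Iio, mem_compl_iff]
        rw [← hlevel y ⟨hy, hy1⟩]
        simp only [mem_setOf_eq, not_le]
      rw [this]
      exact isClosed_Icc.isOpen_compl
    · convert isOpen_univ
      ext x
      simp only [mem_preimage, mem_Iio, mem_univ, iff_true]
      exact lt_of_le_of_lt (hf_le_one x) hy1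
  have hconv : ∀ x y lam, lam ∈ Set.Icc (0:ℝ) 1 →
      min (f x) (f y) ≤ f (lam * x + (1 - lam) * y) := by
    intro x y lam hlam
    set m := min (f x) (f y) with hm
    set z := lam * x + (1 - lam) * y with hz
    rcases le_or_gt m 0 with hm0 | hm0
    · exact hm0.trans (hf_nonneg _)
    have hstep : ∀ μ ∈ Set.Ioo (0:ℝ) m, μ ≤ f z := by
      intro μ hμ
      have hμ1 : μ ∈ Set.Ioc (0:ℝ) 1 :=
        ⟨hμ.1, hμ.2.le.trans ((min_le_left _ _).trans (hf_le_one x))⟩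
      have hxm : x ∈ Set.Icc (γ μ) (ν μ) := by
        rw [← hlevel μ hμ1]
        exact hμ.2.le.trans (min_le_left _ _)
      have hym : y ∈ Set.Icc (γ μ) (ν μ) := by
        rw [← hlevel μ hμ1]
        exact hμ.2.le.trans (min_le_right _ _)
      have hzm : z ∈ Set.Icc (γ μ) (ν μ) := by
        constructor
        · nlinarith [hxm.1, hym.1, hlam.1, hlam.2]
        · nlinarith [hxm.2, hym.2, hlam.1, hlam.2]
      rw [← hlevel μ hμ1] at hzm
      exact hzm
    by_contra h
    push_neg at h
    obtain ⟨μ, h1, h2⟩ := exists_between h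
    exact absurd (hstep μ ⟨lt_of_le_of_lt (hf_nonneg z) h1, h2⟩) (not_le.2 h1)
  refine ⟨⟨f, fun x => ⟨hf_nonneg x, hf_le_one x⟩, ⟨γ 1, hnormal⟩, hconv, husc, by
      rw [show {x | 0 < f x} = {x | 0 < f x} from rfl]
      exact isCompact_Icc.of_isClosed_subset isClosed_closure
        (closure_minimal hsupp isClosed_Icc)⟩, ?_, ?_⟩
  · intro lam hlam
    rcases eq_or_lt_of_le hlam.1 with h0 | h0
    · simp only [levelSet, ← h0, if_pos rfl]
      exact hcl
    · rw [levelSet, if_neg (ne_of_gt h0)]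
      exact hlevel lam ⟨h0, hlam.2⟩
  · intro v hv
    -- uniqueness
    have hle : ∀ a b : FuzzyNumber,
        (∀ lam ∈ Set.Icc (0:ℝ) 1, a.levelSet lam = b.levelSet lam) →
        ∀ x, a.toFun x ≤ b.toFun x := by
      intro a b hab x
      rcases eq_or_lt_of_le (a.mem_Icc' x).1 with h0 | h0
      · rw [← h0]
        exact (b.mem_Icc' x).1
      · have hlam : a.toFun x ∈ Set.Icc (0:ℝ) 1 := a.mem_Icc' x
        have hx : x ∈ a.levelSet (a.toFun x) := by
          rw [levelSet, if_neg (ne_of_gt h0)]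
          exact Set.mem_setOf_eq ▸ le_refl (a.toFun x)
        rw [hab _ hlam, levelSet, if_neg (ne_of_gt h0)] at hx
        exact hx
    apply FuzzyNumber.ext'
    have hboth : ∀ lam ∈ Set.Icc (0:ℝ) 1, v.levelSet lam =
        FuzzyNumber.levelSet ⟨f, fun x => ⟨hf_nonneg x, hf_le_one x⟩, ⟨γ 1, hnormal⟩,
          hconv, husc, by
            exact isCompact_Icc.of_isClosed_subset isClosed_closure
              (closure_minimal hsupp isClosed_Icc)⟩ lam := by
      intro lam hlam
      rw [hv lam hlam]
      rcases eq_or_lt_of_le hlam.1 with h0 | h0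
      · rw [levelSet, if_pos h0.symm, ← h0]
        exact hcl.symm
      · rw [levelSet, if_neg (ne_of_gt h0)]
        exact (hlevel lam ⟨h0, hlam.2⟩).symm
    funext x
    exact le_antisymm (hle _ _ hboth x)
      (hle _ _ (fun lam hlam => (hboth lam hlam).symm) x)
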